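/- Let h ≥ 1, q₀ = 2^h, q = 2^{2h+1}, and let S_h be the smooth projective model of the curve y^q + y = x^{q₀}(x^q + x) over 𝔽₂ (the Suzuki curve). For every n ≥ 1, the number of 𝔽_{2^n}-rational points satisfies #S_h(𝔽_{2^n}) = 2^n + 1 + (2^{gcd(n, 2h+1)} - 1) · S_n(f), where S_n(f) = Σ_{x ∈ 𝔽_{2^n}} (-1)^{Tr_{𝔽_{2^n}/𝔽₂}(x^{q₀}(x^q + x))}. -/

import Mathlib

open Finset Polynomial

-- Bezout for naturals
lemma suz_nat_bezout (a b : ℕ) (ha : 0 < a) : ∃ u v : ℕ, a * u = Nat.gcd a b + b * v := by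
  have key := Nat.gcd_eq_gcd_ab a b
  set x := Nat.gcdA a b with hx
  set y := Nat.gcdB a b with hy
  rcases Nat.eq_zero_or_pos b with rfl | hb
  · exact ⟨1, 0, by simp⟩
  · set t : ℤ := |x| + |y| + 1 with ht
    have hxt : 0 ≤ x + b * t := by
      have : (1:ℤ) ≤ b := by exact_mod_cast hb
      nlinarith [abs_nonneg x, abs_nonneg y, le_abs_self x, neg_abs_le x]
    have hyt : 0 ≤ a * t - y := by
      have : (1:ℤ) ≤ a := by exact_mod_cast ha
      nlinarith [abs_nonneg x, abs_nonneg y, le_abs_self y, neg_abs_le y]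
    refine ⟨(x + b * t).toNat, (a * t - y).toNat, ?_⟩
    have : (a : ℤ) * (x + b * t) = Nat.gcd a b + b * (a * t - y) := by ring_nf; linarith [key]
    have h2 : (a : ℤ) * ((x + b * t).toNat : ℤ) = (Nat.gcd a b : ℤ) + b * ((a * t - y).toNat : ℤ) := by
      rwa [Int.toNat_of_nonneg hxt, Int.toNat_of_nonneg hyt]
    exact_mod_cast h2

lemma suz_coprime (h d : ℕ) (hd : d ∣ 2 * h + 1) : Nat.Coprime (2 ^ h + 1) (2 ^ d - 1) := by
  set g := Nat.gcd (2 ^ h + 1) (2 ^ d - 1) with hg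
  have hg1 : (g : ℤ) ∣ 2 ^ h + 1 := by
    exact_mod_cast Int.natCast_dvd_natCast.mpr (Nat.gcd_dvd_left _ _)
  have hg2 : (g : ℤ) ∣ 2 ^ d - 1 := by
    have := Nat.gcd_dvd_right (2 ^ h + 1) (2 ^ d - 1)
    have h1 : (1:ℕ) ≤ 2 ^ d := Nat.one_le_two_pow
    have : (g : ℤ) ∣ ((2 ^ d - 1 : ℕ) : ℤ) := Int.natCast_dvd_natCast.mpr this
    rw [Nat.cast_sub h1] at this; exact_mod_cast this
  obtain ⟨k, hk⟩ := hd
  -- 2^(2h+1) ≡ 2 mod g and ≡ 1 mod g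
  have e1 : (g:ℤ) ∣ 2 ^ (2 * h + 1) - 2 := by
    have : (2:ℤ) ^ (2 * h + 1) - 2 = 2 * ((2 ^ h + 1) * (2 ^ h - 1)) := by
      have e : (2:ℤ) ^ (2*h+1) = 2 * (2^h * 2^h) := by
        rw [pow_succ, two_mul, pow_add]; ring
      rw [e]; ring
    rw [this]
    exact Dvd.dvd.mul_left (hg1.mul_right _) 2
  have e2 : (g:ℤ) ∣ 2 ^ (2 * h + 1) - 1 := by
    have : (2:ℤ) ^ (2 * h + 1) - 1 = (2 ^ d) ^ k - 1 ^ k := by rw [← pow_mul, ← hk]; ring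
    rw [this]
    exact dvd_trans hg2 (by simpa using sub_dvd_pow_sub_pow ((2:ℤ)^d) 1 k)
  have : (g:ℤ) ∣ 1 := by
    have := dvd_sub e2 e1
    simpa using this
  have hg1 : g ∣ 1 := by exact_mod_cast this
  exact Nat.eq_one_of_dvd_one hg1

section FieldLemmas

variable {F : Type*} [Field F]

lemma suz_pow_mul_fixed (z : F) (a : ℕ) (hz : z ^ 2 ^ a = z) (u : ℕ) : z ^ 2 ^ (a * u) = z := by
  induction u with
  | zero => simp
  | succ u ih =>
    have : 2 ^ (a * (u + 1)) = 2 ^ (a * u) * 2 ^ a := by rw [← pow_add, Nat.mul_succ]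
    rw [this, pow_mul, ih, hz]

lemma suz_pow_gcd_fixed (z : F) (a b : ℕ) (ha : 0 < a)
    (hza : z ^ 2 ^ a = z) (hzb : z ^ 2 ^ b = z) : z ^ 2 ^ Nat.gcd a b = z := by
  obtain ⟨u, v, huv⟩ := suz_nat_bezout a b ha
  have h1 : z ^ 2 ^ (a * u) = z := suz_pow_mul_fixed z a hza u
  have h2 : z ^ 2 ^ (b * v) = z := suz_pow_mul_fixed z b hzb v
  have : z ^ 2 ^ (Nat.gcd a b + b * v) = z ^ 2 ^ Nat.gcd a b := by
    rw [pow_add, mul_comm, pow_mul, h2]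
  rw [← this, ← huv, h1]

variable [Fintype F]

/-- Number of solutions of `z ^ s = z` when `s - 1 ∣ q - 1`. -/
lemma suz_card_fixed (s : ℕ) (hs : 1 < s) (hdvd : s - 1 ∣ Fintype.card F - 1) :
    Nat.card {z : F // z ^ s = z} = s := by
  classical
  set q := Fintype.card F with hq
  have hq1 : 1 < q := Fintype.one_lt_card
  -- polynomial divisibility
  have hdvdP : (X ^ s - X : F[X]) ∣ X ^ q - X := by
    obtain ⟨k, hk⟩ := hdvd
    have h1 : (X ^ (s-1) - 1 : F[X]) ∣ X ^ (q-1) - 1 := by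
      have : (X ^ (q-1) - 1 : F[X]) = (X ^ (s-1)) ^ k - 1 ^ k := by
        rw [← pow_mul, ← hk]; ring
      rw [this]
      exact sub_dvd_pow_sub_pow _ _ k
    have e1 : (X ^ s - X : F[X]) = X * (X ^ (s-1) - 1) := by
      rw [mul_sub, mul_one, ← pow_succ', Nat.sub_add_cancel (by omega : 1 ≤ s)]
    have e2 : (X ^ q - X : F[X]) = X * (X ^ (q-1) - 1) := by
      rw [mul_sub, mul_one, ← pow_succ', Nat.sub_add_cancel (by omega : 1 ≤ q)]
    rw [e1, e2]
    exact mul_dvd_mul_left X h1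
  have hQne : (X ^ q - X : F[X]) ≠ 0 := FiniteField.X_pow_card_sub_X_ne_zero F hq1
  have hQroots : (X ^ q - X : F[X]).roots = Finset.univ.val := FiniteField.roots_X_pow_card_sub_X F
  have hle : (X ^ s - X : F[X]).roots ≤ (X ^ q - X : F[X]).roots :=
    Polynomial.roots.le_of_dvd hQne hdvdP
  have hnodup : (X ^ s - X : F[X]).roots.Nodup := by
    refine Multiset.nodup_of_le hle ?_
    rw [hQroots]; exact Finset.univ.nodup
  have hsplitsQ : ((X ^ q - X : F[X])).Splits := by
    rw [Polynomial.splits_iff_card_roots, hQroots,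
      FiniteField.X_pow_card_sub_X_natDegree_eq F hq1]
    simp [hq]
  have hsplitsP : ((X ^ s - X : F[X])).Splits :=
    hsplitsQ.of_dvd hQne hdvdP
  have hcard : (X ^ s - X : F[X]).roots.card = s := by
    rw [Polynomial.splits_iff_card_roots.mp hsplitsP,
      FiniteField.X_pow_card_sub_X_natDegree_eq F hs]
  have hPne : (X ^ s - X : F[X]) ≠ 0 := FiniteField.X_pow_card_sub_X_ne_zero F hs
  rw [Nat.card_eq_fintype_card, Fintype.card_subtype]
  have hset : Finset.univ.filter (fun z : F => z ^ s = z) = (X ^ s - X : F[X]).roots.toFinset := by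
    ext z
    simp only [Finset.mem_filter, Finset.mem_univ, true_and, Multiset.mem_toFinset,
      Polynomial.mem_roots hPne, Polynomial.IsRoot.def, Polynomial.eval_sub,
      Polynomial.eval_pow, Polynomial.eval_X, sub_eq_zero]
  rw [hset, Multiset.toFinset_card_of_nodup hnodup, hcard]

end FieldLemmas
section TraceLemmas

variable {F : Type*} [Field F] [Finite F] [Algebra (ZMod 2) F] [CharP F 2]

lemma suz_trace_sq (x : F) :
    Algebra.trace (ZMod 2) F (x ^ 2) = Algebra.trace (ZMod 2) F x := by
  have : FiniteDimensional (ZMod 2) F := Module.Finite.of_finite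
  apply (algebraMap (ZMod 2) F).injective
  rw [trace_eq_sum_automorphisms, trace_eq_sum_automorphisms]
  have : ∑ σ : F ≃ₐ[ZMod 2] F, σ (x ^ 2) = (∑ σ : F ≃ₐ[ZMod 2] F, σ x) ^ 2 := by
    rw [sum_pow_char]
    exact Finset.sum_congr rfl fun σ _ => map_pow σ x 2
  rw [this, ← trace_eq_sum_automorphisms, ← map_pow]
  congr 1
  have : ∀ a : ZMod 2, a ^ 2 = a := by decide
  rw [this]

lemma suz_trace_pow_pow (x : F) (k : ℕ) :
    Algebra.trace (ZMod 2) F (x ^ 2 ^ k) = Algebra.trace (ZMod 2) F x := by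
  induction k with
  | zero => simp
  | succ k ih =>
    have : x ^ 2 ^ (k + 1) = (x ^ 2 ^ k) ^ 2 := by rw [← pow_mul, pow_succ]
    rw [this, suz_trace_sq, ih]

lemma suz_trace_psi_mul (e : ℕ) (y z : F) (hz : z ^ 2 ^ e = z) :
    Algebra.trace (ZMod 2) F ((y ^ 2 ^ e + y) * z) = 0 := by
  have key : (y ^ 2 ^ e + y) * z = (y * z) ^ 2 ^ e + y * z := by
    rw [add_mul, mul_pow, hz]
  rw [key, map_add, suz_trace_pow_pow]
  exact CharTwo.add_self_eq_zero _

end TraceLemmas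
section Psi

variable {F : Type*} [Field F] [Finite F] [Algebra (ZMod 2) F] [CharP F 2]

/-- The additive map `y ↦ y^(2^e) + y` as a `ZMod 2`-linear map. -/
noncomputable def suzPsi (e : ℕ) : F →ₗ[ZMod 2] F where
  toFun y := y ^ 2 ^ e + y
  map_add' a b := by rw [add_pow_char_pow]; ring
  map_smul' c y := by
    rcases (by decide : ∀ c : ZMod 2, c = 0 ∨ c = 1) c with rfl | rfl
    · simp
    · simp

omit [Finite F] in
lemma suzPsi_apply (e : ℕ) (y : F) : suzPsi e y = y ^ 2 ^ e + y := rfl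

lemma suz_exists_root (e : ℕ) (t : F)
    (ht : ∀ z : F, z ^ 2 ^ e = z → Algebra.trace (ZMod 2) F (t * z) = 0) :
    ∃ y : F, y ^ 2 ^ e + y = t := by
  have : FiniteDimensional (ZMod 2) F := Module.Finite.of_finite
  set ψ : F →ₗ[ZMod 2] F := suzPsi e with hψ
  set K' : Submodule (ZMod 2) F := LinearMap.ker ψ with hK'
  have memK' : ∀ z : F, z ∈ K' ↔ z ^ 2 ^ e = z := by
    intro z
    rw [hK', LinearMap.mem_ker, suzPsi_apply]
    constructor
    · intro hz
      rw [CharTwo.add_eq_iff_eq_add] at hz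
      rw [hz, zero_add]
    · intro hz; rw [hz]; exact CharTwo.add_self_eq_zero z
  let B := Algebra.traceForm (ZMod 2) F
  let Φ : F →ₗ[ZMod 2] Module.Dual (ZMod 2) K' := K'.dualRestrict.comp B
  have hΦapply : ∀ (w : F) (z : K'), Φ w z = Algebra.trace (ZMod 2) F (w * (z : F)) := by
    intro w z
    simp only [Φ, B, LinearMap.comp_apply, Submodule.dualRestrict_apply,
      Algebra.traceForm_apply]
  have hBsurj : Function.Surjective ⇑B := by
    intro g
    refine ⟨(B.toDual (traceForm_nondegenerate (ZMod 2) F)).symm g, ?_⟩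
    ext v
    exact LinearMap.BilinForm.apply_toDual_symm_apply
      (B := B) (hB := traceForm_nondegenerate (ZMod 2) F) (f := g) (v := v)
  have hΦsurj : Function.Surjective ⇑Φ :=
    (Subspace.dualRestrict_surjective (W := K')).comp hBsurj
  have hrange : LinearMap.range Φ = ⊤ := LinearMap.range_eq_top.mpr hΦsurj
  have h1 : Module.finrank (ZMod 2) (LinearMap.range Φ) + Module.finrank (ZMod 2) (LinearMap.ker Φ)
      = Module.finrank (ZMod 2) F := LinearMap.finrank_range_add_finrank_ker Φ
  have h2 : Module.finrank (ZMod 2) (LinearMap.range ψ) + Module.finrank (ZMod 2) K'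
      = Module.finrank (ZMod 2) F := LinearMap.finrank_range_add_finrank_ker ψ
  have hdual : Module.finrank (ZMod 2) (LinearMap.range Φ) = Module.finrank (ZMod 2) K' := by
    rw [hrange, finrank_top, Subspace.dual_finrank_eq]
  have hle : LinearMap.range ψ ≤ LinearMap.ker Φ := by
    rintro _ ⟨y, rfl⟩
    rw [LinearMap.mem_ker]
    apply LinearMap.ext
    intro z
    rw [hΦapply, suzPsi_apply, LinearMap.zero_apply]
    exact suz_trace_psi_mul e y (z : F) ((memK' z).mp z.2)
  have heq : LinearMap.range ψ = LinearMap.ker Φ :=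
    Submodule.eq_of_le_of_finrank_eq hle (by omega)
  have htK : t ∈ LinearMap.ker Φ := by
    rw [LinearMap.mem_ker]
    apply LinearMap.ext
    intro z
    rw [hΦapply, LinearMap.zero_apply]
    exact ht (z : F) ((memK' z).mp z.2)
  rw [← heq] at htK
  obtain ⟨y, hy⟩ := htK
  exact ⟨y, hy⟩

end Psi
section Fiber

variable {F : Type*} [Field F] [Fintype F] [DecidableEq F] [Algebra (ZMod 2) F] [CharP F 2]

lemma suz_neg_one_pow_add_one (a : ZMod 2) : (-1 : ℤ) ^ (a + 1).val = -(-1 : ℤ) ^ a.val := by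
  revert a; decide

lemma suz_fiber_count (e : ℕ) (t : F) :
    ((Finset.univ.filter (fun y : F => y ^ 2 ^ e + y = t)).card : ℤ)
      = ∑ z ∈ Finset.univ.filter (fun z : F => z ^ 2 ^ e = z),
          (-1 : ℤ) ^ (Algebra.trace (ZMod 2) F (t * z)).val := by
  by_cases hex : ∃ y : F, y ^ 2 ^ e + y = t
  · obtain ⟨y₀, hy₀⟩ := hex
    have hRHS : ∀ z ∈ Finset.univ.filter (fun z : F => z ^ 2 ^ e = z),
        (-1 : ℤ) ^ (Algebra.trace (ZMod 2) F (t * z)).val = 1 := by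
      intro z hz
      rw [Finset.mem_filter] at hz
      have := suz_trace_psi_mul e y₀ z hz.2
      rw [hy₀] at this
      rw [this, ZMod.val_zero, pow_zero]
    rw [Finset.sum_congr rfl hRHS, Finset.sum_const, nsmul_eq_mul, mul_one]
    congr 1
    apply Finset.card_bij' (fun y _ => y + y₀) (fun z _ => z + y₀)
    · intro y hy
      rw [Finset.mem_filter] at hy ⊢
      refine ⟨Finset.mem_univ _, ?_⟩
      have h1 : (y + y₀) ^ 2 ^ e + (y + y₀) = (y ^ 2 ^ e + y) + (y₀ ^ 2 ^ e + y₀) := by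
        rw [add_pow_char_pow]; ring
      rw [hy.2, hy₀] at h1
      rw [CharTwo.add_eq_iff_eq_add] at h1
      rw [h1, CharTwo.add_self_eq_zero, zero_add]
    · intro z hz
      rw [Finset.mem_filter] at hz ⊢
      refine ⟨Finset.mem_univ _, ?_⟩
      have h1 : (z + y₀) ^ 2 ^ e + (z + y₀) = (z ^ 2 ^ e + z) + (y₀ ^ 2 ^ e + y₀) := by
        rw [add_pow_char_pow]; ring
      rw [hz.2, CharTwo.add_self_eq_zero, zero_add, hy₀] at h1
      exact h1
    · intro y _; rw [add_assoc, CharTwo.add_self_eq_zero, add_zero]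
    · intro z _; rw [add_assoc, CharTwo.add_self_eq_zero, add_zero]
  · have hLHS : Finset.univ.filter (fun y : F => y ^ 2 ^ e + y = t) = ∅ := by
      rw [Finset.filter_eq_empty_iff]
      intro y _
      exact fun hy => hex ⟨y, hy⟩
    rw [hLHS]
    have hz₀ : ∃ z₀ : F, z₀ ^ 2 ^ e = z₀ ∧ Algebra.trace (ZMod 2) F (t * z₀) ≠ 0 := by
      by_contra hc
      push_neg at hc
      exact hex (suz_exists_root e t hc)
    obtain ⟨z₀, hz₀fix, hz₀tr⟩ := hz₀
    have hz₀tr1 : Algebra.trace (ZMod 2) F (t * z₀) = 1 := by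
      revert hz₀tr
      generalize Algebra.trace (ZMod 2) F (t * z₀) = a
      revert a; decide
    set S := ∑ z ∈ Finset.univ.filter (fun z : F => z ^ 2 ^ e = z),
          (-1 : ℤ) ^ (Algebra.trace (ZMod 2) F (t * z)).val with hS
    have hSneg : S = ∑ z ∈ Finset.univ.filter (fun z : F => z ^ 2 ^ e = z),
          -((-1 : ℤ) ^ (Algebra.trace (ZMod 2) F (t * z)).val) := by
      rw [hS]
      apply Finset.sum_bij' (fun z _ => z + z₀) (fun z _ => z + z₀)
      · intro z hz
        rw [Finset.mem_filter] at hz ⊢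
        refine ⟨Finset.mem_univ _, ?_⟩
        rw [add_pow_char_pow, hz.2, hz₀fix]
      · intro z hz
        rw [Finset.mem_filter] at hz ⊢
        refine ⟨Finset.mem_univ _, ?_⟩
        rw [add_pow_char_pow, hz.2, hz₀fix]
      · intro z _; rw [add_assoc, CharTwo.add_self_eq_zero, add_zero]
      · intro z _; rw [add_assoc, CharTwo.add_self_eq_zero, add_zero]
      · intro z _
        have : t * (z + z₀) = t * z + t * z₀ := by ring
        rw [this, map_add, hz₀tr1, suz_neg_one_pow_add_one, neg_neg]
    rw [Finset.sum_neg_distrib, ← hS] at hSneg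
    have hS0 : S = 0 := by omega
    rw [hS0, Finset.card_empty, Nat.cast_zero]
  
end Fiber
noncomputable instance (n : ℕ) : Fintype (GaloisField 2 n) := Fintype.ofFinite _

theorem suzuki_point_count (h n : ℕ) (hh : 1 ≤ h) (hn : 0 < n) :
    (Nat.card {p : GaloisField 2 n × GaloisField 2 n |
        p.2 ^ (2 ^ (2 * h + 1)) + p.2 = p.1 ^ (2 ^ h) * (p.1 ^ (2 ^ (2 * h + 1)) + p.1)} : ℤ)
      + 1 =
    2 ^ n + 1 + (2 ^ Nat.gcd n (2 * h + 1) - 1) *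
      ∑ x : GaloisField 2 n,
        (-1 : ℤ) ^ (Algebra.trace (ZMod 2) (GaloisField 2 n)
          (x ^ (2 ^ h) * (x ^ (2 ^ (2 * h + 1)) + x))).val := by
  classical
  set m := 2 * h + 1 with hm
  set d := Nat.gcd n m with hd
  set S₁ := ∑ x : GaloisField 2 n,
        (-1 : ℤ) ^ (Algebra.trace (ZMod 2) (GaloisField 2 n)
          (x ^ (2 ^ h) * (x ^ (2 ^ m) + x))).val with hS₁
  have hd_pos : 0 < d := Nat.gcd_pos_of_pos_left m hn
  have hd_dvd_n : d ∣ n := Nat.gcd_dvd_left n m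
  have hd_dvd_m : d ∣ m := Nat.gcd_dvd_right n m
  have hcardF : Fintype.card (GaloisField 2 n) = 2 ^ n := by
    rw [← Nat.card_eq_fintype_card]; exact GaloisField.card 2 n hn.ne'
  -- the fixed sets agree
  have hfix_iff : ∀ z : GaloisField 2 n, z ^ 2 ^ m = z ↔ z ^ 2 ^ d = z := by
    intro z
    constructor
    · intro hz
      have hzn : z ^ 2 ^ n = z := by rw [← hcardF]; exact FiniteField.pow_card z
      exact suz_pow_gcd_fixed z n m hn hzn hz
    · intro hz
      obtain ⟨k, hk⟩ := hd_dvd_m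
      rw [hk]
      exact suz_pow_mul_fixed z d hz k
  set K := Finset.univ.filter (fun z : GaloisField 2 n => z ^ 2 ^ m = z) with hK
  have hKcard : K.card = 2 ^ d := by
    have h1 : K = Finset.univ.filter (fun z : GaloisField 2 n => z ^ 2 ^ d = z) := by
      ext z
      simp only [hK, Finset.mem_filter, Finset.mem_univ, true_and, hfix_iff z]
    have hdvd : 2 ^ d - 1 ∣ Fintype.card (GaloisField 2 n) - 1 := by
      rw [hcardF]
      obtain ⟨k, hk⟩ := hd_dvd_n
      have : 2 ^ n - 1 = (2 ^ d) ^ k - 1 ^ k := by rw [← pow_mul, ← hk, one_pow]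
      rw [this]
      exact Nat.sub_dvd_pow_sub_pow _ _ _
    have h2 := suz_card_fixed (F := GaloisField 2 n) (2 ^ d)
      (Nat.one_lt_two_pow_iff.mpr hd_pos.ne') hdvd
    rw [h1, ← Fintype.card_subtype, ← Nat.card_eq_fintype_card, h2]
  have h0K : (0 : GaloisField 2 n) ∈ K := by
    rw [hK, Finset.mem_filter]
    exact ⟨Finset.mem_univ _, by rw [zero_pow (by positivity)]⟩
  -- substitution: every nonzero z in K is a (q₀+1)-st power of an element of K
  have hsubst : ∀ z : GaloisField 2 n, z ∈ K → z ≠ 0 →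
      ∃ t : GaloisField 2 n, t ≠ 0 ∧ t ^ 2 ^ m = t ∧ t ^ (2 ^ h + 1) = z := by
    intro z hzK hzne
    have hzfix : z ^ 2 ^ m = z := (Finset.mem_filter.mp hzK).2
    have hzd : z ^ 2 ^ d = z := (hfix_iff z).mp hzfix
    have hz1 : z ^ (2 ^ d - 1) = 1 := by
      have h1 : z ^ (2 ^ d - 1) * z = z := by
        rw [← pow_succ, Nat.sub_add_cancel Nat.one_le_two_pow, hzd]
      apply mul_right_cancel₀ hzne
      rw [h1, one_mul]
    have hcop := suz_coprime h d hd_dvd_m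
    by_cases hd1 : 2 ^ d - 1 = 1
    · have hz_one : z = 1 := by rw [← hz1, hd1, pow_one]
      exact ⟨1, one_ne_zero, by rw [one_pow], by rw [one_pow, hz_one]⟩
    · have h2d : 2 ≤ 2 ^ d := by
        calc 2 = 2 ^ 1 := (pow_one 2).symm
        _ ≤ 2 ^ d := Nat.pow_le_pow_right (by norm_num) hd_pos
      have hgt : 1 < 2 ^ d - 1 := by omega
      obtain ⟨c, -, hc⟩ := Nat.exists_mul_mod_eq_one_of_coprime hcop hgt
      refine ⟨z ^ c, pow_ne_zero c hzne, ?_, ?_⟩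
      · rw [← pow_mul, mul_comm c, pow_mul, hzfix]
      · rw [← pow_mul]
        set k := (2 ^ h + 1) * c / (2 ^ d - 1) with hkdef
        have hthis : (2 ^ d - 1) * k + 1 = (2 ^ h + 1) * c := by
          have := Nat.div_add_mod ((2 ^ h + 1) * c) (2 ^ d - 1)
          rw [hc] at this
          rw [hkdef, this]
        have hcc : c * (2 ^ h + 1) = (2 ^ d - 1) * k + 1 := by
          rw [mul_comm c, ← hthis]
        rw [hcc, pow_add, pow_mul, hz1, one_pow, one_mul, pow_one]
  -- the affine point count
  have key : (Nat.card {p : GaloisField 2 n × GaloisField 2 n |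
        p.2 ^ (2 ^ m) + p.2 = p.1 ^ (2 ^ h) * (p.1 ^ (2 ^ m) + p.1)} : ℤ)
      = 2 ^ n + ((2 ^ d : ℤ) - 1) * S₁ := by
    have e1 : Nat.card {p : GaloisField 2 n × GaloisField 2 n |
        p.2 ^ (2 ^ m) + p.2 = p.1 ^ (2 ^ h) * (p.1 ^ (2 ^ m) + p.1)}
        = ∑ x : GaloisField 2 n, (Finset.univ.filter
            (fun y : GaloisField 2 n => y ^ 2 ^ m + y = x ^ (2 ^ h) * (x ^ (2 ^ m) + x))).card := by
      rw [Nat.card_eq_fintype_card]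
      refine Eq.trans (Fintype.card_congr
        (Equiv.subtypeProdEquivSigmaSubtype
          (fun a b : GaloisField 2 n => b ^ 2 ^ m + b = a ^ (2 ^ h) * (a ^ (2 ^ m) + a)))) ?_
      rw [Fintype.card_sigma]
      exact Finset.sum_congr rfl fun x _ => Fintype.card_subtype _
    rw [e1]
    push_cast
    have e2 : ∀ x : GaloisField 2 n,
        ((Finset.univ.filter
            (fun y : GaloisField 2 n => y ^ 2 ^ m + y = x ^ (2 ^ h) * (x ^ (2 ^ m) + x))).card : ℤ)
        = ∑ z ∈ K, (-1 : ℤ) ^ (Algebra.trace (ZMod 2) (GaloisField 2 n)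
            (x ^ (2 ^ h) * (x ^ (2 ^ m) + x) * z)).val :=
      fun x => suz_fiber_count m (x ^ (2 ^ h) * (x ^ (2 ^ m) + x))
    rw [Finset.sum_congr rfl fun x _ => e2 x, Finset.sum_comm]
    rw [← Finset.insert_erase h0K, Finset.sum_insert (Finset.notMem_erase _ _)]
    have e3 : ∑ x : GaloisField 2 n, (-1 : ℤ) ^ (Algebra.trace (ZMod 2) (GaloisField 2 n)
        (x ^ (2 ^ h) * (x ^ (2 ^ m) + x) * 0)).val = 2 ^ n := by
      have : ∀ x : GaloisField 2 n, (-1 : ℤ) ^ (Algebra.trace (ZMod 2) (GaloisField 2 n)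
          (x ^ (2 ^ h) * (x ^ (2 ^ m) + x) * 0)).val = 1 := by
        intro x
        rw [mul_zero, map_zero, ZMod.val_zero, pow_zero]
      rw [Finset.sum_congr rfl fun x _ => this x, Finset.sum_const, Finset.card_univ, hcardF,
        nsmul_eq_mul, mul_one]
      push_cast
      ring
    have e4 : ∀ z ∈ K.erase 0, ∑ x : GaloisField 2 n,
        (-1 : ℤ) ^ (Algebra.trace (ZMod 2) (GaloisField 2 n)
          (x ^ (2 ^ h) * (x ^ (2 ^ m) + x) * z)).val = S₁ := by
      intro z hz
      obtain ⟨hzne, hzK⟩ := Finset.mem_erase.mp hz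
      obtain ⟨t, ht0, htfix, htpow⟩ := hsubst z hzK hzne
      have hscale : ∀ x : GaloisField 2 n,
          (t * x) ^ (2 ^ h) * ((t * x) ^ (2 ^ m) + t * x)
            = x ^ (2 ^ h) * (x ^ (2 ^ m) + x) * z := by
        intro x
        have htz : t ^ 2 ^ h * t = z := by rw [← pow_succ, htpow]
        calc (t * x) ^ (2 ^ h) * ((t * x) ^ (2 ^ m) + t * x)
            = t ^ 2 ^ h * t * (x ^ (2 ^ h) * (x ^ (2 ^ m) + x)) := by
              rw [mul_pow, mul_pow, htfix]; ring
          _ = x ^ (2 ^ h) * (x ^ (2 ^ m) + x) * z := by rw [htz]; ring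
      have := Equiv.sum_comp (Equiv.mulLeft₀ t ht0)
        (fun x : GaloisField 2 n => (-1 : ℤ) ^ (Algebra.trace (ZMod 2) (GaloisField 2 n)
          (x ^ (2 ^ h) * (x ^ (2 ^ m) + x))).val)
      rw [hS₁, ← this]
      apply Finset.sum_congr rfl
      intro x _
      have : (Equiv.mulLeft₀ t ht0) x = t * x := rfl
      rw [this, hscale x]
    rw [Finset.sum_congr rfl e4, Finset.sum_const, Finset.card_erase_of_mem h0K, hKcard,
      nsmul_eq_mul, e3]
    rw [Nat.cast_sub Nat.one_le_two_pow]
    push_cast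
    ring
  rw [key]
  ring
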